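/- arXiv:2404.12327 — 5 statements merged into one kernel-verified Lean document; each statement's English description precedes it below -/
import Mathlib

section
/- Gaplessness Criteria (Theorem 1, abstract form). Let H be a nontrivial complex Hilbert space and A : H → H a bounded self-adjoint operator that is negative semidefinite and has trivial kernel. Then the following four statements are equivalent: (a) for every t > 0, the operator norm of exp(t·A) equals 1 (equivalently, sup over nonzero φ of ‖exp(t·A)φ‖/‖φ‖ = 1); (b) the infimum over nonzero φ of ‖Aφ‖/‖φ‖ equals 0; (c) the supremum over nonzero φ of Re⟨φ, Aφ⟩/‖φ‖² equals 0; (d) 0 is an accumulation point of the spectrum of A, i.e. for every ε > 0 there exists λ in the spectrum of A with 0 < |λ| < ε. -/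
open scoped InnerProductSpace Pointwise

lemma aux_isUnit {H : Type*} [NormedAddCommGroup H] [InnerProductSpace ℂ H] [CompleteSpace H]
    (T : H →L[ℂ] H) (hT : IsSelfAdjoint T) {c : ℝ} (hc : 0 < c)
    (hbd : ∀ φ : H, c * ‖φ‖ ≤ ‖T φ‖) : IsUnit T := by
  have hsym : ∀ x y : H, ⟪T x, y⟫_ℂ = ⟪x, T y⟫_ℂ :=
    (ContinuousLinearMap.isSelfAdjoint_iff_isSymmetric).mp hT
  have hinj : Function.Injective T := by
    intro x y hxy
    have := hbd (x - y)
    rw [map_sub, hxy, sub_self, norm_zero] at this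
    have h2 : ‖x - y‖ ≤ 0 := by nlinarith [norm_nonneg (x - y)]
    have := le_antisymm h2 (norm_nonneg _)
    rwa [norm_eq_zero, sub_eq_zero] at this
  have hanti : AntilipschitzWith (Real.toNNReal c)⁻¹ T :=
    T.antilipschitz_of_bound (by
      intro x
      rw [NNReal.coe_inv, Real.coe_toNNReal _ hc.le, inv_mul_eq_div, le_div_iff₀ hc]
      linarith [hbd x])
  have hclosed : IsClosed (Set.range T) := hanti.isClosed_range T.uniformContinuous
  have hrange : LinearMap.range (T : H →ₗ[ℂ] H) = ⊤ := by
    have hcl : IsClosed ((LinearMap.range (T : H →ₗ[ℂ] H) : Submodule ℂ H) : Set H) := by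
      convert hclosed using 1
      exact LinearMap.coe_range _
    haveI : CompleteSpace (LinearMap.range (T : H →ₗ[ℂ] H)) := hcl.completeSpace_coe
    rw [← Submodule.orthogonal_eq_bot_iff]
    rw [Submodule.eq_bot_iff]
    intro ψ hψ
    have hTψ : T ψ = 0 := by
      have h1 : ⟪T (T ψ), ψ⟫_ℂ = 0 := hψ (T (T ψ)) ⟨T ψ, rfl⟩
      rw [hsym (T ψ) ψ] at h1
      exact inner_self_eq_zero.mp h1
    exact hinj (hTψ.trans (map_zero T).symm)
  exact ContinuousLinearMap.isUnit_iff_bijective.mpr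
    ⟨hinj, LinearMap.range_eq_top.mp hrange⟩

set_option maxHeartbeats 1600000 in
/-- **Gaplessness Criteria** (Theorem 1, abstract form). For a bounded self-adjoint
negative-semidefinite operator `A` with trivial kernel on a nontrivial complex Hilbert
space, the four conditions (a), (b), (c), (d) are equivalent. -/
theorem gaplessness_criteria
    {H : Type*} [NormedAddCommGroup H] [InnerProductSpace ℂ H] [CompleteSpace H]
    [Nontrivial H] (A : H →L[ℂ] H)
    (hsa : ∀ φ ψ : H, ⟪A φ, ψ⟫_ℂ = ⟪φ, A ψ⟫_ℂ)
    (hreal : ∀ φ : H, (⟪φ, A φ⟫_ℂ).im = 0)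
    (hneg : ∀ φ : H, (⟪φ, A φ⟫_ℂ).re ≤ 0)
    (hker : ∀ φ : H, A φ = 0 → φ = 0) :
    List.TFAE
      [ (∀ t : ℝ, 0 < t → ‖NormedSpace.exp (t • A)‖ = 1),
        (⨅ φ : {ψ : H // ψ ≠ 0}, ‖A φ.1‖ / ‖φ.1‖) = 0,
        (⨆ φ : {ψ : H // ψ ≠ 0}, (⟪φ.1, A φ.1⟫_ℂ).re / ‖φ.1‖ ^ 2) = 0,
        (∀ ε : ℝ, 0 < ε → ∃ l ∈ spectrum ℂ A, 0 < ‖l‖ ∧ ‖l‖ < ε) ] := by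
  have hA : IsSelfAdjoint A := ContinuousLinearMap.isSelfAdjoint_iff_isSymmetric.mpr hsa
  obtain ⟨x₀, hx₀⟩ := exists_ne (0 : H)
  haveI hne : Nonempty {ψ : H // ψ ≠ 0} := ⟨⟨x₀, hx₀⟩⟩
  have hAne : A ≠ 0 := by
    intro h
    exact hx₀ (hker x₀ (by rw [h]; rfl))
  -- real vs complex spectrum
  have hmem : ∀ x : ℝ, x ∈ spectrum ℝ A ↔ (x : ℂ) ∈ spectrum ℂ A := by
    intro x
    rw [← spectrum.preimage_algebraMap (S := ℂ)]
    simp [Set.mem_preimage, Complex.coe_algebraMap]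
  have hPiff : 0 ∈ spectrum ℝ A ↔ ¬ IsUnit A := spectrum.zero_mem_iff ℝ
  -- the spectrum is nonpositive
  have hσ_nonpos : ∀ x ∈ spectrum ℝ A, x ≤ 0 := by
    intro lam hlam
    by_contra hpos
    push_neg at hpos
    set T : H →L[ℂ] H := algebraMap ℝ (H →L[ℂ] H) lam - A with hTdef
    have hTapp : ∀ φ : H, T φ = (lam : ℂ) • φ - A φ := by
      intro φ
      simp [hTdef, Algebra.algebraMap_eq_smul_one, ContinuousLinearMap.sub_apply,
        ContinuousLinearMap.smul_apply, Complex.coe_smul]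
    have hTsa : IsSelfAdjoint T :=
      IsSelfAdjoint.sub (IsSelfAdjoint.algebraMap _ (star_trivial lam)) hA
    have hbd : ∀ φ : H, lam * ‖φ‖ ≤ ‖T φ‖ := by
      intro φ
      rcases eq_or_ne φ 0 with rfl | hφ
      · simp
      have hφn : 0 < ‖φ‖ := norm_pos_iff.mpr hφ
      have h1 : lam * ‖φ‖ ^ 2 ≤ (⟪φ, T φ⟫_ℂ).re := by
        rw [hTapp φ, inner_sub_right, inner_smul_right]
        have h5 : (⟪φ, φ⟫_ℂ).re = ‖φ‖ ^ 2 := by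
          rw [show (⟪φ, φ⟫_ℂ).re = RCLike.re ⟪φ, φ⟫_ℂ from rfl, inner_self_eq_norm_sq]
        have h3 : (⟪φ, φ⟫_ℂ).im = 0 := by
          rw [show (⟪φ, φ⟫_ℂ).im = RCLike.im ⟪φ, φ⟫_ℂ from rfl, inner_self_im]
        simp only [Complex.sub_re, Complex.mul_re, Complex.ofReal_re, Complex.ofReal_im]
        have h2 := hneg φ
        nlinarith
      have h4 : (⟪φ, T φ⟫_ℂ).re ≤ ‖φ‖ * ‖T φ‖ := by
        calc (⟪φ, T φ⟫_ℂ).re ≤ ‖⟪φ, T φ⟫_ℂ‖ := Complex.re_le_norm _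
        _ ≤ ‖φ‖ * ‖T φ‖ := norm_inner_le_norm _ _
      have := h1.trans h4
      rw [sq] at this
      nlinarith
    rw [spectrum.mem_iff] at hlam
    exact hlam (aux_isUnit T hTsa hpos hbd)
  -- a bound below from invertibility
  have hUnitBound : IsUnit A → ∃ m : ℝ, 0 < m ∧ ∀ φ : H, m * ‖φ‖ ≤ ‖A φ‖ := by
    rintro ⟨u, hu⟩
    set Bi : H →L[ℂ] H := ↑u⁻¹ with hBidef
    have hBiA : ∀ φ : H, Bi (A φ) = φ := by
      intro φ
      have : (Bi * A) φ = φ := by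
        rw [hBidef, ← hu, Units.inv_mul]; rfl
      simpa [ContinuousLinearMap.mul_apply] using this
    have hBipos : 0 < ‖Bi‖ := norm_pos_iff.mpr (by
      intro h
      exact hx₀ ((hBiA x₀).symm.trans (by rw [h]; simp)))
    refine ⟨‖Bi‖⁻¹, inv_pos.mpr hBipos, fun φ => ?_⟩
    have h1 : ‖φ‖ ≤ ‖Bi‖ * ‖A φ‖ := by
      calc ‖φ‖ = ‖Bi (A φ)‖ := by rw [hBiA]
      _ ≤ ‖Bi‖ * ‖A φ‖ := Bi.le_opNorm _
    rw [inv_mul_eq_div, div_le_iff₀ hBipos]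
    linarith [h1]
  -- strict negativity of the Rayleigh quotient from invertibility (via square root)
  have hRayleighNeg : IsUnit A → ∃ δ : ℝ, 0 < δ ∧
      ∀ φ : H, φ ≠ 0 → (⟪φ, A φ⟫_ℂ).re / ‖φ‖ ^ 2 ≤ -δ := by
    intro hu
    obtain ⟨m, hm, hbd⟩ := hUnitBound hu
    set B : H →L[ℂ] H := -A with hBdef
    have hBsa : IsSelfAdjoint B := hA.neg
    have hBspec : ∀ x ∈ spectrum ℝ B, 0 ≤ x := by
      intro x hx
      have : -x ∈ spectrum ℝ A := by
        rw [hBdef, ← spectrum.neg_eq] at hx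
        simpa using hx
      linarith [hσ_nonpos _ this]
    set C : H →L[ℂ] H := cfc Real.sqrt B with hCdef
    have hCsa : IsSelfAdjoint C := cfc_predicate _ _
    have hCsym : ∀ x y : H, ⟪C x, y⟫_ℂ = ⟪x, C y⟫_ℂ :=
      (ContinuousLinearMap.isSelfAdjoint_iff_isSymmetric).mp hCsa
    have hCC : C * C = B := by
      rw [hCdef, ← cfc_mul Real.sqrt Real.sqrt B Real.continuous_sqrt.continuousOn
        Real.continuous_sqrt.continuousOn]
      have h1 : cfc (fun x => Real.sqrt x * Real.sqrt x) B = cfc (fun x : ℝ => x) B :=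
        cfc_congr fun x hx => Real.mul_self_sqrt (hBspec x hx)
      rw [h1, cfc_id' ℝ B]
    have hCne : C ≠ 0 := by
      intro h
      rw [h, zero_mul] at hCC
      exact hAne (by rw [← neg_neg A, ← hBdef, ← hCC, neg_zero])
    have hCpos : 0 < ‖C‖ := norm_pos_iff.mpr hCne
    refine ⟨(m / ‖C‖) ^ 2, by positivity, fun φ hφ => ?_⟩
    have hφn : 0 < ‖φ‖ := norm_pos_iff.mpr hφ
    have hBφ : B φ = C (C φ) := by
      rw [← hCC]; rfl
    have h1 : (⟪φ, B φ⟫_ℂ).re = ‖C φ‖ ^ 2 := by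
      rw [hBφ, ← hCsym φ (C φ),
        show (⟪C φ, C φ⟫_ℂ).re = RCLike.re ⟪C φ, C φ⟫_ℂ from rfl, inner_self_eq_norm_sq]
    have h2 : m * ‖φ‖ ≤ ‖C‖ * ‖C φ‖ := by
      calc m * ‖φ‖ ≤ ‖A φ‖ := hbd φ
      _ = ‖B φ‖ := by rw [hBdef]; simp
      _ = ‖C (C φ)‖ := by rw [hBφ]
      _ ≤ ‖C‖ * ‖C φ‖ := C.le_opNorm _
    have h3 : (⟪φ, A φ⟫_ℂ).re = -‖C φ‖ ^ 2 := by
      have : (⟪φ, B φ⟫_ℂ) = -⟪φ, A φ⟫_ℂ := by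
        rw [hBdef]; simp [inner_neg_right]
      rw [← h1, this, Complex.neg_re, neg_neg]
    rw [h3, div_le_iff₀ (by positivity)]
    have h4 : m * ‖φ‖ / ‖C‖ ≤ ‖C φ‖ := by
      rw [div_le_iff₀ hCpos]
      linarith [h2]
    have h5 : (m * ‖φ‖ / ‖C‖) ^ 2 ≤ ‖C φ‖ ^ 2 := by
      have h6 : 0 ≤ m * ‖φ‖ / ‖C‖ := by positivity
      nlinarith
    have h7 : (m * ‖φ‖ / ‖C‖) ^ 2 = (m / ‖C‖) ^ 2 * ‖φ‖ ^ 2 := by ring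
    nlinarith
  -- (b) iff 0 in the real spectrum
  have hbdd_b : BddBelow (Set.range fun φ : {ψ : H // ψ ≠ 0} => ‖A φ.1‖ / ‖φ.1‖) := by
    refine ⟨0, ?_⟩
    rintro _ ⟨φ, rfl⟩
    positivity
  have h2iff : (⨅ φ : {ψ : H // ψ ≠ 0}, ‖A φ.1‖ / ‖φ.1‖) = 0 ↔ 0 ∈ spectrum ℝ A := by
    constructor
    · intro h
      by_contra hP
      obtain ⟨m, hm, hbd⟩ := hUnitBound (not_not.mp (fun hnu => hP (hPiff.mpr hnu)))
      have hle : m ≤ ⨅ φ : {ψ : H // ψ ≠ 0}, ‖A φ.1‖ / ‖φ.1‖ := by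
        refine le_ciInf fun φ => ?_
        rw [le_div_iff₀ (norm_pos_iff.mpr φ.2)]
        exact hbd φ.1
      rw [h] at hle
      linarith
    · intro hP
      refine le_antisymm ?_ (le_ciInf fun φ => by positivity)
      by_contra h
      push_neg at h
      set m := ⨅ φ : {ψ : H // ψ ≠ 0}, ‖A φ.1‖ / ‖φ.1‖ with hmdef
      have hbd : ∀ φ : H, m * ‖φ‖ ≤ ‖A φ‖ := by
        intro φ
        rcases eq_or_ne φ 0 with rfl | hφ
        · simp
        have h1 : m ≤ ‖A φ‖ / ‖φ‖ := ciInf_le hbdd_b ⟨φ, hφ⟩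
        rw [le_div_iff₀ (norm_pos_iff.mpr hφ)] at h1
        exact h1
      exact (hPiff.mp hP) (aux_isUnit A hA h hbd)
  -- (c) iff 0 in the real spectrum
  have hbdd_c : BddAbove
      (Set.range fun φ : {ψ : H // ψ ≠ 0} => (⟪φ.1, A φ.1⟫_ℂ).re / ‖φ.1‖ ^ 2) := by
    refine ⟨0, ?_⟩
    rintro _ ⟨φ, rfl⟩
    exact div_nonpos_iff.mpr (Or.inr ⟨hneg _, sq_nonneg _⟩)
  have h3iff : (⨆ φ : {ψ : H // ψ ≠ 0}, (⟪φ.1, A φ.1⟫_ℂ).re / ‖φ.1‖ ^ 2) = 0 ↔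
      0 ∈ spectrum ℝ A := by
    constructor
    · intro h
      by_contra hP
      obtain ⟨δ, hδ, hbd⟩ := hRayleighNeg (not_not.mp (fun hnu => hP (hPiff.mpr hnu)))
      have hle : (⨆ φ : {ψ : H // ψ ≠ 0}, (⟪φ.1, A φ.1⟫_ℂ).re / ‖φ.1‖ ^ 2) ≤ -δ :=
        ciSup_le fun φ => hbd φ.1 φ.2
      rw [h] at hle
      linarith
    · intro hP
      refine le_antisymm
        (ciSup_le fun φ => div_nonpos_iff.mpr (Or.inr ⟨hneg _, sq_nonneg _⟩)) ?_
      by_contra h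
      push_neg at h
      set S := ⨆ φ : {ψ : H // ψ ≠ 0}, (⟪φ.1, A φ.1⟫_ℂ).re / ‖φ.1‖ ^ 2 with hSdef
      have hbd : ∀ φ : H, (-S) * ‖φ‖ ≤ ‖A φ‖ := by
        intro φ
        rcases eq_or_ne φ 0 with rfl | hφ
        · simp
        have hφn : 0 < ‖φ‖ := norm_pos_iff.mpr hφ
        have h1 : (⟪φ, A φ⟫_ℂ).re / ‖φ‖ ^ 2 ≤ S := le_ciSup hbdd_c ⟨φ, hφ⟩
        rw [div_le_iff₀ (by positivity)] at h1
        have h2 : -(⟪φ, A φ⟫_ℂ).re ≤ ‖φ‖ * ‖A φ‖ := by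
          calc -(⟪φ, A φ⟫_ℂ).re ≤ |(⟪φ, A φ⟫_ℂ).re| := neg_le_abs _
          _ ≤ ‖⟪φ, A φ⟫_ℂ‖ := Complex.abs_re_le_norm _
          _ ≤ ‖φ‖ * ‖A φ‖ := norm_inner_le_norm _ _
        nlinarith
      exact (hPiff.mp hP) (aux_isUnit A hA (by linarith) hbd)
  -- (d) iff 0 in the real spectrum
  have h4iff : (∀ ε : ℝ, 0 < ε → ∃ l ∈ spectrum ℂ A, 0 < ‖l‖ ∧ ‖l‖ < ε) ↔
      0 ∈ spectrum ℝ A := by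
    constructor
    · intro h
      rw [hmem 0, Complex.ofReal_zero]
      have hcl : closure (spectrum ℂ A) = spectrum ℂ A := (spectrum.isClosed A).closure_eq
      rw [← hcl]
      rw [Metric.mem_closure_iff]
      intro ε hε
      obtain ⟨l, hl, _, hlε⟩ := h ε hε
      exact ⟨l, hl, by rwa [dist_zero_left]⟩
    · intro hP ε hε
      by_contra hno
      push_neg at hno
      set f : ℝ → ℝ := fun x => max (1 - |x| / ε) 0 with hfdef
      have hfc : Continuous f :=
        (continuous_const.sub (continuous_abs.div_const ε)).max continuous_const
      have hf0 : f 0 = 1 := by simp [hfdef]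
      have hfz : ∀ x ∈ spectrum ℝ A, x ≠ 0 → f x = 0 := by
        intro x hx hx0
        have hxc : (x : ℂ) ∈ spectrum ℂ A := (hmem x).mp hx
        have hnorm : ‖(x : ℂ)‖ = |x| := by
          rw [Complex.norm_real, Real.norm_eq_abs]
        have h1 : ε ≤ |x| := by
          have := hno (x : ℂ) hxc (by rw [hnorm]; exact abs_pos.mpr hx0)
          rwa [hnorm] at this
        rw [hfdef]
        have : 1 - |x| / ε ≤ 0 := by
          rw [sub_nonpos, le_div_iff₀ hε]
          linarith
        simpa [max_eq_right this]
      set P : H →L[ℂ] H := cfc f A with hPdef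
      have hAP : A * P = 0 := by
        have e1 : A * P = cfc (fun x : ℝ => x * f x) A := by
          rw [cfc_mul (fun x : ℝ => x) f A continuous_id.continuousOn hfc.continuousOn,
            cfc_id' ℝ A]
        have e2 : cfc (fun x : ℝ => x * f x) A = cfc (fun _ : ℝ => (0 : ℝ)) A := by
          refine cfc_congr fun x hx => ?_
          rcases eq_or_ne x 0 with rfl | hx0
          · simp
          · rw [hfz x hx hx0, mul_zero]
        rw [e1, e2]
        simp
      have hP0 : P = 0 := by
        ext φ
        have h1 : A (P φ) = 0 := by
          have := congrArg (fun T : H →L[ℂ] H => T φ) hAP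
          simpa [ContinuousLinearMap.mul_apply] using this
        simpa using hker _ h1
      have h1mem : (1 : ℝ) ∈ spectrum ℝ P := by
        rw [hPdef, cfc_map_spectrum f A hA hfc.continuousOn]
        exact ⟨0, hP, hf0⟩
      rw [hP0, spectrum.zero_eq] at h1mem
      exact one_ne_zero (Set.mem_singleton_iff.mp h1mem)
  -- (a) iff 0 in the real spectrum
  have hta : ∀ t : ℝ, IsSelfAdjoint (t • A) := fun t => by
    rw [IsSelfAdjoint, star_smul, star_trivial, hA.star_eq]
  have hexp : ∀ t : ℝ, NormedSpace.exp (t • A) = cfc Real.exp (t • A) := fun t =>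
      (CFC.real_exp_eq_normedSpace_exp (hta t)).symm
  have hG : ∀ t : ℝ, IsGreatest ((fun x => ‖Real.exp x‖) '' spectrum ℝ (t • A))
      ‖cfc Real.exp (t • A)‖ := fun t =>
    IsGreatest.norm_cfc Real.exp (t • A) (hf := Real.continuous_exp.continuousOn) (ha := hta t)
  have hspec_t : ∀ t : ℝ, t ≠ 0 → spectrum ℝ (t • A) = t • spectrum ℝ A := by
    intro t ht
    simpa using spectrum.unit_smul_eq_smul (R := ℝ) A (Units.mk0 t ht)
  have h1iff : (∀ t : ℝ, 0 < t → ‖NormedSpace.exp (t • A)‖ = 1) ↔ 0 ∈ spectrum ℝ A := by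
    constructor
    · intro h
      have h1 := h 1 one_pos
      rw [hexp 1] at h1
      obtain ⟨x₁, hx₁mem, hx₁eq⟩ := (hG 1).1
      rw [one_smul] at hx₁mem
      have hx₁eq' : ‖Real.exp x₁‖ = 1 := hx₁eq.trans h1
      rw [Real.norm_eq_abs, abs_of_pos (Real.exp_pos _)] at hx₁eq'
      have hx₁0 : x₁ = 0 := Real.exp_injective (by rw [hx₁eq', Real.exp_zero])
      rwa [hx₁0] at hx₁mem
    · intro hP t ht
      rw [hexp t]
      have hmem0 : (0 : ℝ) ∈ spectrum ℝ (t • A) := by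
        rw [hspec_t t ht.ne']
        exact ⟨0, hP, smul_zero t⟩
      refine le_antisymm ?_ ?_
      · obtain ⟨x₁, hx₁mem, hx₁eq⟩ := (hG t).1
        have e : ‖cfc Real.exp (t • A)‖ = ‖Real.exp x₁‖ := hx₁eq.symm
        rw [e, Real.norm_eq_abs, abs_of_pos (Real.exp_pos _)]
        rw [hspec_t t ht.ne'] at hx₁mem
        obtain ⟨y, hy, hyx⟩ := hx₁mem
        have hy0 : y ≤ 0 := hσ_nonpos y hy
        have hx₁0 : x₁ ≤ 0 := by
          rw [← hyx]
          simpa using mul_nonpos_of_nonneg_of_nonpos ht.le hy0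
        calc Real.exp x₁ ≤ Real.exp 0 := Real.exp_le_exp.mpr hx₁0
        _ = 1 := Real.exp_zero
      · have h9 : ‖Real.exp 0‖ ≤ ‖cfc Real.exp (t • A)‖ :=
          (hG t).2 (Set.mem_image_of_mem (fun x => ‖Real.exp x‖) hmem0)
        calc (1 : ℝ) = ‖Real.exp 0‖ := by rw [Real.exp_zero, norm_one]
        _ ≤ _ := h9
  tfae_have 1 ↔ 2 := h1iff.trans h2iff.symm
  tfae_have 1 ↔ 3 := h1iff.trans h3iff.symm
  tfae_have 1 ↔ 4 := h1iff.trans h4iff.symm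
  tfae_finish
end

section
/- Implication (c)→(d) of the Gaplessness Criteria. Let H be a nontrivial complex Hilbert space and A : H → H a bounded self-adjoint negative semidefinite operator with trivial kernel. If the supremum over nonzero φ ∈ H of Re⟨φ, Aφ⟩/‖φ‖² equals 0, then 0 belongs to the spectrum of A and, moreover, 0 is an accumulation point of the spectrum: for every ε > 0 there exists λ in the spectrum of A with 0 < |λ| < ε. -/
set_option maxHeartbeats 1000000

open scoped InnerProductSpace

/-- Implication (c) → (d) of the Gaplessness Criteria: if `Re⟪φ, Aφ⟫/‖φ‖²` has
supremum `0` over nonzero `φ`, then `0` belongs to the spectrum of `A` and is an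
accumulation point of the spectrum. -/
theorem gapless_c_implies_d
    {H : Type*} [NormedAddCommGroup H] [InnerProductSpace ℂ H] [CompleteSpace H]
    [Nontrivial H] (A : H →L[ℂ] H)
    (hsa : ∀ φ ψ : H, ⟪A φ, ψ⟫_ℂ = ⟪φ, A ψ⟫_ℂ)
    (hreal : ∀ φ : H, (⟪φ, A φ⟫_ℂ).im = 0)
    (hneg : ∀ φ : H, (⟪φ, A φ⟫_ℂ).re ≤ 0)
    (hker : ∀ φ : H, A φ = 0 → φ = 0)
    (hc : (⨆ φ : {ψ : H // ψ ≠ 0}, (⟪φ.1, A φ.1⟫_ℂ).re / ‖φ.1‖ ^ 2) = 0) :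
    (0 : ℂ) ∈ spectrum ℂ A ∧
      ∀ ε : ℝ, 0 < ε → ∃ l ∈ spectrum ℂ A, 0 < ‖l‖ ∧ ‖l‖ < ε := by
  have hA : IsSelfAdjoint A :=
    ContinuousLinearMap.isSelfAdjoint_iff_isSymmetric.mpr (fun x y => hsa x y)
  set B : H →L[ℂ] H := -A with hBdef
  have hB : IsSelfAdjoint B := hA.neg
  have hne : Nonempty {ψ : H // ψ ≠ 0} := by
    obtain ⟨x, hx⟩ := exists_ne (0 : H)
    exact ⟨⟨x, hx⟩⟩
  -- the quadratic form of B is nonnegative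
  have hQ : ∀ φ : H, 0 ≤ (⟪B φ, φ⟫_ℂ).re := by
    intro φ
    have h1 : ⟪B φ, φ⟫_ℂ = -⟪A φ, φ⟫_ℂ := by simp [hBdef]
    have h2 : (⟪A φ, φ⟫_ℂ).re = (⟪φ, A φ⟫_ℂ).re := by
      rw [← inner_conj_symm φ (A φ)]; exact Complex.conj_re _
    rw [h1, Complex.neg_re, h2]
    linarith [hneg φ]
  have hBnonneg : (0 : H →L[ℂ] H) ≤ B :=
    (ContinuousLinearMap.nonneg_iff_isPositive B).mpr ⟨ContinuousLinearMap.isSelfAdjoint_iff_isSymmetric.mp hB, fun x => hQ x⟩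
  -- key: the spectrum of B has points below any ε > 0
  have hbelow : ∀ ε : ℝ, 0 < ε → ∃ x ∈ spectrum ℝ B, x < ε := by
    intro ε hε
    by_contra h
    push_neg at h
    -- then B - ε • 1 is positive, contradicting the sup hypothesis
    have hsub : IsSelfAdjoint (B - algebraMap ℝ (H →L[ℂ] H) ε) :=
      hB.sub ((IsSelfAdjoint.all ε).algebraMap _)
    have h1 : (0 : H →L[ℂ] H) ≤ B - algebraMap ℝ (H →L[ℂ] H) ε := by
      rw [StarOrderedRing.nonneg_iff_spectrum_nonneg (R := ℝ) _ hsub]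
      intro x hx
      rw [← spectrum.sub_singleton_eq] at hx
      obtain ⟨y, hy, z, hz, hyz⟩ := Set.mem_sub.mp hx
      simp only [Set.mem_singleton_iff] at hz
      subst hz
      rw [← hyz]
      have := h y hy
      linarith
    have h2 := ((ContinuousLinearMap.nonneg_iff_isPositive _).mp h1).2
    have h3 : ∀ φ : H, ε * ‖φ‖ ^ 2 ≤ (⟪B φ, φ⟫_ℂ).re := by
      intro φ
      have := h2 φ
      rw [ContinuousLinearMap.reApplyInnerSelf_apply] at this
      have hALG : (B - algebraMap ℝ (H →L[ℂ] H) ε) φ = B φ - ε • φ := by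
        simp [Algebra.algebraMap_eq_smul_one]
      rw [hALG, inner_sub_left] at this
      have hsm : (⟪ε • φ, φ⟫_ℂ).re = ε * ‖φ‖ ^ 2 := by
        rw [← Complex.coe_smul, inner_smul_left, Complex.conj_ofReal,
          Complex.re_ofReal_mul]
        congr 1
        have := inner_self_eq_norm_sq (𝕜 := ℂ) φ
        rw [RCLike.re_to_complex] at this
        exact this
      simp only [RCLike.re_to_complex, Complex.sub_re, hsm] at this
      linarith
    -- contradiction with hc
    obtain ⟨⟨φ, hφ⟩, hφ2⟩ := exists_lt_of_lt_ciSup (by rw [hc]; linarith :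
      -ε < ⨆ φ : {ψ : H // ψ ≠ 0}, (⟪φ.1, A φ.1⟫_ℂ).re / ‖φ.1‖ ^ 2)
    have hn : (0:ℝ) < ‖φ‖ ^ 2 := pow_pos (norm_pos_iff.mpr hφ) 2
    have h4 : (⟪φ, A φ⟫_ℂ).re ≤ -(ε * ‖φ‖ ^ 2) := by
      have h5 : ⟪B φ, φ⟫_ℂ = -⟪A φ, φ⟫_ℂ := by simp [hBdef]
      have h6 : (⟪A φ, φ⟫_ℂ).re = (⟪φ, A φ⟫_ℂ).re := by
        rw [← inner_conj_symm φ (A φ)]; exact Complex.conj_re _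
      have := h3 φ
      rw [h5, Complex.neg_re, h6] at this
      linarith
    have : (⟪φ, A φ⟫_ℂ).re / ‖φ‖ ^ 2 ≤ -ε := by
      rw [div_le_iff₀ hn]
      calc (⟪φ, A φ⟫_ℂ).re ≤ -(ε * ‖φ‖ ^ 2) := h4
        _ = -ε * ‖φ‖ ^ 2 := by ring
    linarith
  -- spectrum of B is nonnegative
  have hsnn : ∀ x ∈ spectrum ℝ B, 0 ≤ x := fun x hx =>
    spectrum_nonneg_of_nonneg hBnonneg hx
  -- 0 ∈ spectrum ℝ B
  have h0B : (0 : ℝ) ∈ spectrum ℝ B := by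
    have hch : ∀ n : ℕ, ∃ x ∈ spectrum ℝ B, x < 1 / (n + 1) := fun n =>
      hbelow _ (by positivity)
    choose x hx hxlt using hch
    have htend : Filter.Tendsto x Filter.atTop (nhds 0) :=
      squeeze_zero (fun n => hsnn _ (hx n)) (fun n => (hxlt n).le)
        tendsto_one_div_add_atTop_nhds_zero_nat
    exact (spectrum.isClosed B).mem_of_tendsto htend (.of_forall hx)
  have h0A : (0 : ℂ) ∈ spectrum ℂ A := by
    rw [spectrum.zero_mem_iff]
    intro hu
    have h1 : IsUnit B := by rw [hBdef]; exact hu.neg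
    exact (spectrum.zero_mem_iff (R := ℝ)).mp h0B h1
  refine ⟨h0A, fun ε hε => ?_⟩
  -- find a spectrum point of B in (0, ε)
  have hx : ∃ x ∈ spectrum ℝ B, 0 < x ∧ x < ε := by
    by_contra h
    push_neg at h
    have hsp : ∀ x ∈ spectrum ℝ B, x = 0 ∨ ε ≤ x := by
      intro x hx
      rcases eq_or_lt_of_le (hsnn x hx) with h0 | h0
      · exact Or.inl h0.symm
      · exact Or.inr (h x hx h0)
    set f : ℝ → ℝ := fun x => max 0 (1 - x / ε) with hf
    have hfc : Continuous f := by fun_prop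
    set P : H →L[ℂ] H := cfc f B with hP
    have hBP : B * P = 0 := by
      have h1 : cfc (fun x : ℝ => x * f x) B = B * P := by
        rw [hP, cfc_mul (fun x : ℝ => x) f B (by fun_prop) hfc.continuousOn, cfc_id' ℝ B]
      rw [← h1]
      have h2 : cfc (fun x : ℝ => x * f x) B = cfc (0 : ℝ → ℝ) B := by
        apply cfc_congr
        intro x hxs
        rcases hsp x hxs with rfl | hxe
        · simp
        · have : f x = 0 := by
            rw [hf]
            simp only
            rw [max_eq_left]
            rw [sub_nonpos, le_div_iff₀ hε, one_mul]
            exact hxe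
          simp [this]
      rw [h2, cfc_zero]
    have hPne : P ≠ 0 := by
      intro h0
      have h1 : (1 : ℝ) ∈ spectrum ℝ P := by
        rw [hP, cfc_map_spectrum f B hB hfc.continuousOn]
        refine ⟨0, h0B, ?_⟩
        simp [hf]
      rw [h0, spectrum.mem_iff] at h1
      exact h1 (by simpa using isUnit_one)
    obtain ⟨φ, hφ⟩ : ∃ φ : H, P φ ≠ 0 := by
      by_contra h
      push_neg at h
      exact hPne (ContinuousLinearMap.ext fun φ => by simp [h φ])
    have hBPφ : B (P φ) = 0 := by
      have := congrArg (fun T : H →L[ℂ] H => T φ) hBP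
      simpa using this
    have : A (P φ) = 0 := by
      have : -A (P φ) = 0 := hBPφ
      simpa [neg_eq_zero] using this
    exact hφ (hker _ this)
  obtain ⟨x, hxB, hx0, hxε⟩ := hx
  refine ⟨((-x : ℝ) : ℂ), ?_, ?_, ?_⟩
  · have hxA : (-x : ℝ) ∈ spectrum ℝ A := by
      have : x ∈ spectrum ℝ (-A) := hxB
      rw [← spectrum.neg_eq] at this
      simpa using this
    exact spectrum.algebraMap_mem ℂ hxA
  · simp only [Complex.norm_real]
    rw [norm_neg, Real.norm_of_nonneg hx0.le]
    exact hx0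
  · simp only [Complex.norm_real]
    rw [norm_neg, Real.norm_of_nonneg hx0.le]
    exact hxε
end

section
/- Equivalence (a)↔(d) of the Gaplessness Criteria. Let H be a nontrivial complex Hilbert space and A : H → H a bounded self-adjoint negative semidefinite operator with trivial kernel. Then the following are equivalent: (a) for every t > 0 the operator norm of exp(t·A) equals 1; (d) 0 is an accumulation point of the spectrum of A, i.e. for every ε > 0 there exists λ in the spectrum of A with 0 < |λ| < ε. -/
open scoped InnerProductSpace

/-- Equivalence (a) ↔ (d) of the Gaplessness Criteria: for a bounded self-adjoint
negative-semidefinite operator `A` with trivial kernel on a nontrivial complex Hilbert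
space, `‖exp (t • A)‖ = 1` for all `t > 0` iff `0` is an accumulation point of the
spectrum of `A`. -/
theorem gapless_a_iff_d
    {H : Type*} [NormedAddCommGroup H] [InnerProductSpace ℂ H] [CompleteSpace H]
    [Nontrivial H] (A : H →L[ℂ] H)
    (hsa : ∀ φ ψ : H, ⟪A φ, ψ⟫_ℂ = ⟪φ, A ψ⟫_ℂ)
    (hreal : ∀ φ : H, (⟪φ, A φ⟫_ℂ).im = 0)
    (hneg : ∀ φ : H, (⟪φ, A φ⟫_ℂ).re ≤ 0)
    (hker : ∀ φ : H, A φ = 0 → φ = 0) :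
    (∀ t : ℝ, 0 < t → ‖NormedSpace.exp (t • A)‖ = 1) ↔
      (∀ ε : ℝ, 0 < ε → ∃ l ∈ spectrum ℂ A, 0 < ‖l‖ ∧ ‖l‖ < ε) := by
  have hA : IsSelfAdjoint A := LinearMap.IsSymmetric.isSelfAdjoint (fun x y => hsa x y)
  have hpos : (-A).IsPositive := by
    refine ⟨hA.neg.isSymmetric, fun x => ?_⟩
    have h := hneg x
    have h2 : (⟪A x, x⟫_ℂ).re = (⟪x, A x⟫_ℂ).re := inner_re_symm (𝕜 := ℂ) (A x) x
    simp only [ContinuousLinearMap.reApplyInnerSelf, ContinuousLinearMap.neg_apply,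
      inner_neg_left]
    simp only [RCLike.re_to_complex] at *
    simp [h2]; linarith
  have hle : A ≤ 0 := by rw [ContinuousLinearMap.le_def]; simpa using hpos
  have hspecR : ∀ x ∈ spectrum ℝ A, x ≤ 0 := by
    intro x hx
    have h1 : -x ∈ spectrum ℝ (-A) := by
      rw [← spectrum.neg_eq]; exact Set.neg_mem_neg.mpr hx
    have := spectrum_nonneg_of_nonneg (neg_nonneg.mpr hle) h1
    linarith
  have himg : Complex.ofReal '' spectrum ℝ A = spectrum ℂ A := by
    simpa using hA.spectrumRestricts.algebraMap_image
  have hexp : ∀ t : ℝ, NormedSpace.exp (t • A) = cfc (fun x : ℝ => Real.exp (t * x)) A := by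
    intro t
    have h1 : IsSelfAdjoint (t • A) := by
      rw [IsSelfAdjoint, star_smul, star_trivial, hA.star_eq]
    rw [← CFC.real_exp_eq_normedSpace_exp h1,
      ← cfc_comp_smul t Real.exp A (by fun_prop) hA]
    simp [smul_eq_mul]
  constructor
  · intro ha ε hε
    by_contra hcon
    push_neg at hcon
    have hgap : ∀ x ∈ spectrum ℝ A, x ≠ 0 → x ≤ -ε := by
      intro x hx hx0
      have hmem : (x : ℂ) ∈ spectrum ℂ A := himg ▸ ⟨x, hx, rfl⟩
      have h1 := hcon _ hmem (by simpa using abs_pos.mpr hx0)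
      have hx' := hspecR x hx
      rw [Complex.norm_real, Real.norm_eq_abs, abs_of_nonpos hx'] at h1
      linarith
    by_cases h0 : (0:ℝ) ∈ spectrum ℝ A
    · -- 0 isolated in the spectrum: build a spectral projection, contradicting trivial kernel
      set f : ℝ → ℝ := fun x => max (1 - |x| / ε) 0 with hf
      have hfc : Continuous f := by fun_prop
      have hfσ : ∀ x ∈ spectrum ℝ A, x * f x = 0 := by
        intro x hx
        rcases eq_or_ne x 0 with rfl | hx0
        · simp
        · have hxe := hgap x hx hx0
          have hfx : f x = 0 := by
            apply max_eq_right
            have h1 : ε ≤ |x| := by rw [abs_of_nonpos (hspecR x hx)]; linarith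
            have h2 : 1 ≤ |x| / ε := (one_le_div hε).mpr h1
            linarith
          simp [hfx]
      set P := cfc f A with hP
      have hnorm : (1:ℝ) ≤ ‖P‖ := by
        have h1 := norm_apply_le_norm_cfc f A h0 hfc.continuousOn hA
        simpa [f] using h1
      have hAP : A * P = 0 := by
        calc A * P = cfc (fun x : ℝ => x) A * cfc f A := by rw [cfc_id' ℝ A hA]
          _ = cfc (fun x : ℝ => x * f x) A :=
              (cfc_mul _ _ A (by fun_prop) hfc.continuousOn).symm
          _ = cfc (fun _ : ℝ => (0:ℝ)) A := cfc_congr hfσ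
          _ = 0 := by exact cfc_zero ℝ A
      obtain ⟨ψ, hψ⟩ : ∃ ψ, P ψ ≠ 0 := by
        by_contra hall
        push_neg at hall
        have hP0 : P = 0 := ContinuousLinearMap.ext fun ψ => hall ψ
        rw [hP0] at hnorm; simp at hnorm; linarith
      exact hψ (hker _ (by rw [← ContinuousLinearMap.mul_apply, hAP]; simp))
    · -- spectral gap: the whole spectrum is ≤ -ε, so ‖exp A‖ < 1
      have h1 := ha 1 one_pos
      rw [hexp 1] at h1
      have hub : ‖cfc (fun x : ℝ => Real.exp (1 * x)) A‖ ≤ Real.exp (-ε) := by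
        apply norm_cfc_le (Real.exp_nonneg _)
        intro x hx
        have hxe := hgap x hx (fun h => h0 (h ▸ hx))
        rw [Real.norm_eq_abs, abs_of_pos (Real.exp_pos _), one_mul]
        exact Real.exp_le_exp.mpr hxe
      rw [h1] at hub
      have : Real.exp (-ε) < 1 := Real.exp_lt_one_iff.mpr (by linarith)
      linarith
  · intro hd t ht
    rw [hexp t]
    set N := ‖cfc (fun x : ℝ => Real.exp (t * x)) A‖ with hN
    have hub : N ≤ 1 := by
      apply norm_cfc_le zero_le_one
      intro x hx
      rw [Real.norm_eq_abs, abs_of_pos (Real.exp_pos _)]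
      exact Real.exp_le_one_iff.mpr (mul_nonpos_of_nonneg_of_nonpos ht.le (hspecR x hx))
    have hstep : ∀ δ : ℝ, 0 < δ → Real.exp (-(t * δ)) < N := by
      intro δ hδ
      obtain ⟨l, hl, hl0, hlδ⟩ := hd δ hδ
      rw [← himg] at hl
      obtain ⟨x, hx, rfl⟩ := hl
      rw [Complex.norm_real, Real.norm_eq_abs] at hl0 hlδ
      have hx0 : x ≤ 0 := hspecR x hx
      have hxgt : -δ < x := by
        rw [abs_of_nonpos hx0] at hlδ; linarith
      have hle' := norm_apply_le_norm_cfc (fun x : ℝ => Real.exp (t * x)) A hx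
        (by fun_prop) hA
      rw [Real.norm_eq_abs, abs_of_pos (Real.exp_pos _)] at hle'
      have : Real.exp (-(t * δ)) < Real.exp (t * x) := by
        apply Real.exp_lt_exp.mpr
        nlinarith
      exact this.trans_le hle'
    have hN0 : 0 < N := (Real.exp_pos _).trans (hstep 1 one_pos)
    by_contra hne
    have hlt : N < 1 := lt_of_le_of_ne hub hne
    have hlog : Real.log N < 0 := Real.log_neg hN0 hlt
    have h2 := hstep (-Real.log N / t) (div_pos (by linarith) ht)
    rw [show -(t * (-Real.log N / t)) = Real.log N by field_simp] at h2
    rw [Real.exp_log hN0] at h2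
    exact lt_irrefl _ h2
end

section
/- Laguerre moment integral of order 4. For every natural number n, let L_n^{(5)} denote the generalized Laguerre polynomial of degree n and parameter 5, defined by L_n^{(5)}(x) = Σ_{k=0}^{n} (−1)^k · binomial(n+5, n−k) · x^k / k!. Then ∫_0^∞ x⁴ · e^{−x} · (L_n^{(5)}(x))² dx = (n+5)! / (5 · n!). -/
open MeasureTheory

/-- The generalized Laguerre polynomial of degree `n` and parameter `5`,
`L_n^{(5)}(x) = ∑_{k=0}^{n} (−1)^k (n+5 choose n−k) x^k / k!`. -/
noncomputable def laguerre5 (n : ℕ) (x : ℝ) : ℝ :=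
  ∑ k ∈ Finset.range (n + 1),
    (-1 : ℝ) ^ k * (Nat.choose (n + 5) (n - k) : ℝ) * x ^ k / (Nat.factorial k : ℝ)

namespace LaguerreAux

open Finset

/-! ### Combinatorial lemmas -/

lemma alt2 (A : ℕ) : ∀ M : ℕ,
    ∑ t ∈ range (M + 1), (-1 : ℤ) ^ t * ((A + 1).choose (M - t) : ℤ) = (A.choose M : ℤ) := by
  intro M
  induction M with
  | zero => simp
  | succ M ih =>
    rw [Finset.sum_range_succ']
    have h1 : ∀ t ∈ range (M + 1),
        (-1 : ℤ) ^ (t + 1) * ((A + 1).choose (M + 1 - (t + 1)) : ℤ)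
          = -((-1 : ℤ) ^ t * ((A + 1).choose (M - t) : ℤ)) := by
      intro t ht
      have : M + 1 - (t + 1) = M - t := by omega
      rw [this, pow_succ]
      ring
    rw [Finset.sum_congr rfl h1, Finset.sum_neg_distrib, ih]
    have hp : (A + 1).choose (M + 1) = A.choose M + A.choose (M + 1) :=
      Nat.choose_succ_succ A M
    simp only [pow_zero, one_mul, Nat.sub_zero, hp]
    push_cast
    ring

lemma hockey (b k : ℕ) : ∑ i ∈ range (k + 1), ((b + i).choose i) = (b + k + 1).choose k := by
  have h1 : ∀ i ∈ range (k + 1), (b + i).choose i = (b + i).choose b := by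
    intro i _
    rw [← Nat.choose_symm (Nat.le_add_right b i), Nat.add_sub_cancel_left]
  rw [Finset.sum_congr rfl h1]
  have h2 : ∑ m ∈ Icc b (b + k), m.choose b = ∑ i ∈ range (k + 1), (b + i).choose b := by
    rw [← Finset.Ico_add_one_right_eq_Icc, Finset.sum_Ico_eq_sum_range]
    have : b + k + 1 - b = k + 1 := by omega
    rw [this]
  rw [← h2, Nat.sum_Icc_choose]
  rw [← Nat.choose_symm (by omega : b + 1 ≤ b + k + 1)]
  congr 1
  omega

/-- The key double-parameter sum. -/
def gsum (n A β : ℕ) : ℤ :=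
  ∑ k ∈ range (n + 1), (-1 : ℤ) ^ k * (A.choose (n - k) : ℤ) * ((β + k).choose k : ℤ)

lemma innerAlt (n A i : ℕ) (hi : i ≤ n) :
    ∑ k ∈ Finset.Icc i n, (-1 : ℤ) ^ k * ((A + 1).choose (n - k) : ℤ)
      = (-1 : ℤ) ^ i * (A.choose (n - i) : ℤ) := by
  rw [← Finset.Ico_add_one_right_eq_Icc, Finset.sum_Ico_eq_sum_range]
  have h1 : n + 1 - i = (n - i) + 1 := by omega
  rw [h1]
  have h2 : ∀ t ∈ range ((n - i) + 1),
      (-1 : ℤ) ^ (i + t) * ((A + 1).choose (n - (i + t)) : ℤ)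
        = (-1 : ℤ) ^ i * ((-1 : ℤ) ^ t * ((A + 1).choose ((n - i) - t) : ℤ)) := by
    intro t ht
    have : n - (i + t) = (n - i) - t := by omega
    rw [this, pow_add]
    ring
  rw [Finset.sum_congr rfl h2, ← Finset.mul_sum, alt2]

lemma gsum_step (n A β : ℕ) : gsum n (A + 1) (β + 1) = gsum n A β := by
  unfold gsum
  have h1 : ∀ k ∈ range (n + 1),
      (-1 : ℤ) ^ k * ((A + 1).choose (n - k) : ℤ) * ((β + 1 + k).choose k : ℤ)
        = ∑ i ∈ range (k + 1),
            ((β + i).choose i : ℤ) * ((-1 : ℤ) ^ k * ((A + 1).choose (n - k) : ℤ)) := by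
    intro k _
    rw [← Finset.sum_mul]
    have hh : ∑ i ∈ range (k + 1), ((β + i).choose i : ℤ) = ((β + 1 + k).choose k : ℤ) := by
      rw [← Nat.cast_sum, hockey]
      congr 2
      omega
    rw [hh]; ring
  rw [Finset.sum_congr rfl h1]
  have h2 : ∑ k ∈ range (n + 1), ∑ i ∈ range (k + 1),
        ((β + i).choose i : ℤ) * ((-1 : ℤ) ^ k * ((A + 1).choose (n - k) : ℤ))
      = ∑ i ∈ range (n + 1), ∑ k ∈ Finset.Icc i n,
        ((β + i).choose i : ℤ) * ((-1 : ℤ) ^ k * ((A + 1).choose (n - k) : ℤ)) := by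
    have := Finset.sum_Ico_Ico_comm 0 (n + 1)
      (fun i k => ((β + i).choose i : ℤ) * ((-1 : ℤ) ^ k * ((A + 1).choose (n - k) : ℤ)))
    simp only [Nat.Ico_zero_eq_range] at this
    simp only [Finset.Ico_add_one_right_eq_Icc] at this
    rw [this]
  rw [h2]
  refine Finset.sum_congr rfl fun i hi => ?_
  rw [← Finset.mul_sum, innerAlt n A i (by simpa [Nat.lt_succ_iff] using hi)]
  ring

lemma gsum_chain (n A β : ℕ) : ∀ t : ℕ, gsum n (A + t) (β + t) = gsum n A β := by
  intro t
  induction t with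
  | zero => rfl
  | succ t ih => rw [show A + (t+1) = (A + t) + 1 by ring, show β + (t+1) = (β + t) + 1 by ring,
      gsum_step, ih]

lemma gsum_zero (n A : ℕ) : gsum n (A + 1) 0 = (A.choose n : ℤ) := by
  unfold gsum
  have h : ∀ k ∈ range (n + 1),
      (-1 : ℤ) ^ k * ((A + 1).choose (n - k) : ℤ) * ((0 + k).choose k : ℤ)
        = (-1 : ℤ) ^ k * ((A + 1).choose (n - k) : ℤ) := by
    intro k _
    simp
  rw [Finset.sum_congr rfl h, alt2]

lemma gsum_main (n j : ℕ) (hj : j ≤ n) :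
    gsum n (n + 5) (j + 4) = if j = 0 then 1 else 0 := by
  have h5 : n + 5 = ((n - j) + 1) + (j + 4) := by omega
  have h4 : j + 4 = 0 + (j + 4) := by omega
  rw [h5]
  calc gsum n ((n - j) + 1 + (j + 4)) (j + 4)
      = gsum n ((n - j) + 1 + (j + 4)) (0 + (j + 4)) := by rw [← h4]
    _ = gsum n ((n - j) + 1) 0 := gsum_chain n _ 0 (j + 4)
    _ = ((n - j).choose n : ℤ) := gsum_zero n _
    _ = if j = 0 then 1 else 0 := by
        rcases Nat.eq_zero_or_pos j with h | h
        · simp [h]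
        · rw [Nat.choose_eq_zero_of_lt (by omega)]
          simp [h.ne']

/-! ### Integral lemmas -/

lemma integrable_pow_exp (m : ℕ) :
    IntegrableOn (fun x : ℝ => x ^ m * Real.exp (-x)) (Set.Ici 0) := by
  rw [integrableOn_Ici_iff_integrableOn_Ioi]
  have h := Real.GammaIntegral_convergent (s := (m : ℝ) + 1) (by positivity)
  refine h.congr_fun (fun x hx => ?_) measurableSet_Ioi
  have hx0 : (0 : ℝ) < x := hx
  rw [add_sub_cancel_right]
  beta_reduce
  rw [Real.rpow_natCast]
  ring

lemma integral_pow_exp (m : ℕ) :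
    ∫ x in Set.Ici (0 : ℝ), x ^ m * Real.exp (-x) = (Nat.factorial m : ℝ) := by
  rw [MeasureTheory.integral_Ici_eq_integral_Ioi]
  rw [← Real.Gamma_nat_eq_factorial m, Real.Gamma_eq_integral (by positivity)]
  refine setIntegral_congr_fun measurableSet_Ioi fun x hx => ?_
  have hx0 : (0 : ℝ) < x := hx
  rw [add_sub_cancel_right, Real.rpow_natCast]
  ring

end LaguerreAux

open LaguerreAux Finset

/-- Laguerre moment integral of order 4:
`∫_0^∞ x⁴ e^{−x} (L_n^{(5)}(x))² dx = (n+5)! / (5 n!)`. -/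
theorem laguerre_moment_four (n : ℕ) :
    ∫ x in Set.Ici (0 : ℝ), x ^ 4 * Real.exp (-x) * (laguerre5 n x) ^ 2
      = (Nat.factorial (n + 5) : ℝ) / (5 * (Nat.factorial n : ℝ)) := by
  set a : ℕ → ℝ := fun k =>
    (-1 : ℝ) ^ k * (Nat.choose (n + 5) (n - k) : ℝ) / (Nat.factorial k : ℝ) with ha
  -- pointwise expansion of the integrand
  have hpoint : ∀ x : ℝ, x ^ 4 * Real.exp (-x) * (laguerre5 n x) ^ 2
      = ∑ j ∈ range (n + 1), ∑ k ∈ range (n + 1),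
          (a j * a k) * (x ^ (4 + j + k) * Real.exp (-x)) := by
    intro x
    have hL : laguerre5 n x = ∑ k ∈ range (n + 1), a k * x ^ k := by
      unfold laguerre5
      refine Finset.sum_congr rfl fun k _ => ?_
      rw [ha]
      ring
    rw [hL, sq, Finset.sum_mul_sum, Finset.mul_sum]
    refine Finset.sum_congr rfl fun j _ => ?_
    rw [Finset.mul_sum]
    refine Finset.sum_congr rfl fun k _ => ?_
    rw [pow_add, pow_add]
    ring
  -- exchange integral and sums
  have hint : ∫ x in Set.Ici (0 : ℝ), x ^ 4 * Real.exp (-x) * (laguerre5 n x) ^ 2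
      = ∑ j ∈ range (n + 1), ∑ k ∈ range (n + 1),
          (a j * a k) * (Nat.factorial (4 + j + k) : ℝ) := by
    simp only [hpoint]
    rw [integral_finset_sum _ (fun j _ => integrable_finset_sum _
      (fun k _ => ((integrable_pow_exp (4 + j + k)).const_mul (a j * a k))))]
    refine Finset.sum_congr rfl fun j _ => ?_
    rw [integral_finset_sum _
      (fun k _ => ((integrable_pow_exp (4 + j + k)).const_mul (a j * a k)))]
    refine Finset.sum_congr rfl fun k _ => ?_
    rw [MeasureTheory.integral_const_mul, integral_pow_exp]
  rw [hint]
  -- inner combinatorial sum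
  have hinner : ∀ j ∈ range (n + 1),
      ∑ k ∈ range (n + 1), (a j * a k) * (Nat.factorial (4 + j + k) : ℝ)
        = if j = 0 then a 0 * 24 else 0 := by
    intro j hj
    have hjn : j ≤ n := Nat.lt_succ_iff.mp (Finset.mem_range.mp hj)
    have hkey : ∑ k ∈ range (n + 1), a k * (Nat.factorial (4 + j + k) : ℝ)
        = if j = 0 then 24 else 0 := by
      have hterm : ∀ k ∈ range (n + 1),
          a k * (Nat.factorial (4 + j + k) : ℝ)
            = (Nat.factorial (j + 4) : ℝ) *
              (((-1 : ℤ) ^ k * ((n + 5).choose (n - k) : ℤ) * (((j + 4) + k).choose k : ℤ) : ℤ)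
                : ℝ) := by
        intro k _
        have hfac : ((j + 4) + k).choose k * Nat.factorial k * Nat.factorial (j + 4)
            = Nat.factorial ((j + 4) + k) := by
          have := Nat.choose_mul_factorial_mul_factorial
            (show k ≤ (j + 4) + k from Nat.le_add_left k (j + 4))
          simpa [Nat.add_sub_cancel] using this
        have h1 : (4 + j + k) = (j + 4) + k := by omega
        rw [h1, ← hfac, ha]
        have hk0 : (Nat.factorial k : ℝ) ≠ 0 := Nat.cast_ne_zero.mpr (Nat.factorial_ne_zero k)
        push_cast
        field_simp
      rw [Finset.sum_congr rfl hterm, ← Finset.mul_sum]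
      have : ∑ k ∈ range (n + 1),
          (((-1 : ℤ) ^ k * ((n + 5).choose (n - k) : ℤ) * (((j + 4) + k).choose k : ℤ) : ℤ) : ℝ)
          = ((gsum n (n + 5) (j + 4) : ℤ) : ℝ) := by
        rw [gsum]
        push_cast
        ring
      rw [this, gsum_main n j hjn]
      rcases Nat.eq_zero_or_pos j with h | h
      · subst h; norm_num [Nat.factorial]
      · simp [h.ne']
    have : ∑ k ∈ range (n + 1), (a j * a k) * (Nat.factorial (4 + j + k) : ℝ)
        = a j * ∑ k ∈ range (n + 1), a k * (Nat.factorial (4 + j + k) : ℝ) := by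
      rw [Finset.mul_sum]
      refine Finset.sum_congr rfl fun k _ => ?_
      ring
    rw [this, hkey]
    rcases Nat.eq_zero_or_pos j with h | h
    · subst h; simp
    · simp [h.ne']
  rw [Finset.sum_congr rfl hinner, Finset.sum_ite_eq' (range (n + 1)) 0 (fun _ => a 0 * 24)]
  rw [if_pos (Finset.mem_range.mpr (Nat.succ_pos n))]
  have ha0 : a 0 = ((n + 5).choose n : ℝ) := by
    rw [ha]; simp [Nat.factorial]
  have hnat : (n + 5).choose n * Nat.factorial n * 120 = Nat.factorial (n + 5) := by
    have := Nat.choose_mul_factorial_mul_factorial (show n ≤ n + 5 from Nat.le_add_right n 5)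
    simpa [show n + 5 - n = 5 by omega, Nat.factorial] using this
  have hn0 : (Nat.factorial n : ℝ) ≠ 0 := Nat.cast_ne_zero.mpr (Nat.factorial_ne_zero n)
  have hcast : ((n + 5).choose n : ℝ) * (Nat.factorial n : ℝ) * 120
      = (Nat.factorial (n + 5) : ℝ) := by
    exact_mod_cast congrArg (Nat.cast : ℕ → ℝ) hnat
  rw [ha0]
  field_simp
  linarith [hcast]
end

section
/- Power-law decay of a superposition of exponentially decaying modes. The series S(t) = Σ_{n=1}^∞ n^{−2} · e^{−t/n} converges for every t ≥ 0, and t · S(t) tends to 1 as t → +∞; that is, the superposition of modes with relaxation times τ_n = n and amplitudes 1/n² decays like 1/t at late times, slower than any exponential. -/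
open Filter Real

/-- summability of the base series for `t ≥ 0`. -/
lemma plaw_summable (t : ℝ) (ht : 0 ≤ t) :
    Summable (fun n : ℕ => (1 / ((n : ℝ) + 1) ^ 2) * Real.exp (-t / ((n : ℝ) + 1))) := by
  have hsum : Summable (fun n : ℕ => 1 / ((n : ℝ) + 1) ^ 2) := by
    have := (summable_nat_add_iff (f := fun n : ℕ => 1 / (n : ℝ) ^ 2) 1).2
      (summable_one_div_nat_pow.2 (by norm_num))
    simpa using this
  refine hsum.of_nonneg_of_le (fun n => ?_) (fun n => ?_)
  · positivity
  · have hn : (0 : ℝ) < (n : ℝ) + 1 := by positivity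
    have hexp : Real.exp (-t / ((n : ℝ) + 1)) ≤ 1 := by
      rw [Real.exp_le_one_iff]
      apply div_nonpos_of_nonpos_of_nonneg <;> linarith
    have h2 : (0 : ℝ) ≤ 1 / ((n : ℝ) + 1) ^ 2 := by positivity
    calc (1 / ((n : ℝ) + 1) ^ 2) * Real.exp (-t / ((n : ℝ) + 1))
        ≤ (1 / ((n : ℝ) + 1) ^ 2) * 1 := by
          exact mul_le_mul_of_nonneg_left hexp h2
      _ = 1 / ((n : ℝ) + 1) ^ 2 := by ring

/-- telescoping sum. -/
lemma plaw_hasSum_d (t : ℝ) (ht : 0 ≤ t) :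
    HasSum (fun m : ℕ => Real.exp (-t / ((m : ℝ) + 2)) - Real.exp (-t / ((m : ℝ) + 1)))
      (1 - Real.exp (-t)) := by
  have hnonneg : ∀ m : ℕ,
      0 ≤ Real.exp (-t / ((m : ℝ) + 2)) - Real.exp (-t / ((m : ℝ) + 1)) := by
    intro m
    have h1 : (0:ℝ) < (m : ℝ) + 1 := by positivity
    have h2 : (0:ℝ) < (m : ℝ) + 2 := by positivity
    have : -t / ((m : ℝ) + 1) ≤ -t / ((m : ℝ) + 2) := by
      rw [div_le_div_iff₀ h1 h2]; nlinarith
    linarith [Real.exp_le_exp.2 this]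
  rw [hasSum_iff_tendsto_nat_of_nonneg hnonneg]
  have key : ∀ N : ℕ, (∑ m ∈ Finset.range N,
      (Real.exp (-t / ((m : ℝ) + 2)) - Real.exp (-t / ((m : ℝ) + 1))))
      = Real.exp (-t / ((N : ℝ) + 1)) - Real.exp (-t) := by
    intro N
    have := Finset.sum_range_sub (f := fun k : ℕ => Real.exp (-t / ((k : ℝ) + 1))) N
    simp only [Nat.cast_add, Nat.cast_one] at this
    rw [show (∑ m ∈ Finset.range N,
        (Real.exp (-t / ((m : ℝ) + 2)) - Real.exp (-t / ((m : ℝ) + 1))))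
        = ∑ m ∈ Finset.range N,
        (Real.exp (-t / (((m : ℝ) + 1) + 1)) - Real.exp (-t / ((m : ℝ) + 1))) by
      apply Finset.sum_congr rfl; intro m _; ring_nf]
    rw [this]; norm_num
  simp only [key]
  have h1 : Tendsto (fun N : ℕ => -t / ((N : ℝ) + 1)) atTop (nhds 0) := by
    have := tendsto_one_div_add_atTop_nhds_zero_nat (𝕜 := ℝ)
    have h := this.const_mul (-t)
    simp only [mul_zero] at h
    refine h.congr (fun N => ?_)
    field_simp
  have h2 : Tendsto (fun N : ℕ => Real.exp (-t / ((N : ℝ) + 1))) atTop (nhds 1) := by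
    simpa [Function.comp_def] using (Real.continuous_exp.tendsto 0).comp h1
  simpa using h2.sub tendsto_const_nhds

/-- `x * exp (-x) ≤ 1` for `x ≥ 0`. -/
lemma plaw_mul_exp_le (x : ℝ) (hx : 0 ≤ x) : x * Real.exp (-x) ≤ 1 := by
  have h := Real.add_one_le_exp x
  have hp := Real.exp_pos x
  have : x ≤ Real.exp x := by linarith
  rw [Real.exp_neg]
  rw [mul_inv_le_iff₀ hp, one_mul]
  exact this

/-- `x^2 * exp (-x) ≤ 2` for `x ≥ 0`. -/
lemma plaw_sq_exp_le (x : ℝ) (hx : 0 ≤ x) : x ^ 2 * Real.exp (-x) ≤ 2 := by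
  have h := Real.add_one_le_exp (x / 4)
  have hp := Real.exp_pos (x / 4)
  have hE : Real.exp x = (Real.exp (x / 4)) ^ 4 := by
    rw [← Real.exp_nat_mul]; congr 1; push_cast; ring
  have hx2 : x ^ 2 ≤ Real.exp x := by
    rw [hE]
    have ha : x ≤ (x / 4 + 1) ^ 2 := by nlinarith [sq_nonneg (x / 4 - 1)]
    have hb : (x / 4 + 1) ^ 2 ≤ (Real.exp (x / 4)) ^ 2 := by nlinarith
    nlinarith [sq_nonneg (Real.exp (x / 4))]
  have hp2 := Real.exp_pos x
  rw [Real.exp_neg, mul_inv_le_iff₀ hp2]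
  nlinarith

set_option maxHeartbeats 1000000 in
/-- core per-term bound. -/
lemma plaw_core (t n : ℝ) (ht : 0 ≤ t) (hn1 : 1 ≤ n) :
    |t * ((1 / n ^ 2) * Real.exp (-t / n))
      - (Real.exp (-t / (n + 1)) - Real.exp (-t / n))| ≤ 8 / n ^ 2 := by
  have hn : (0:ℝ) < n := by linarith
  have hn1' : (0:ℝ) < n + 1 := by linarith
  obtain ⟨s, hs_def⟩ : ∃ s : ℝ, s = t / n - t / (n + 1) := ⟨_, rfl⟩
  have hs : 0 ≤ s := by
    rw [hs_def, sub_nonneg, div_le_div_iff₀ hn1' hn]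
    nlinarith
  have hs_le : s ≤ t / n ^ 2 := by
    rw [hs_def, div_sub_div _ _ (ne_of_gt hn) (ne_of_gt hn1'),
      div_le_div_iff₀ (by positivity) (by positivity)]
    nlinarith
  have hexp_split : Real.exp (-t / (n + 1)) = Real.exp (-t / n) * Real.exp s := by
    rw [← Real.exp_add]
    congr 1
    rw [hs_def]
    ring
  have hu := Real.exp_pos (-t / n)
  have hes := Real.exp_pos s
  have hlow : s ≤ Real.exp s - 1 := by linarith [Real.add_one_le_exp s]
  have hhigh : Real.exp s - 1 ≤ s * Real.exp s := by
    have h := Real.add_one_le_exp (-s)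
    rw [Real.exp_neg s] at h
    have h2 : ((-s) + 1) * Real.exp s ≤ 1 := by
      rw [← le_div_iff₀ hes]
      rw [div_eq_mul_inv, one_mul]
      exact h
    nlinarith
  have hG : t * ((1 / n ^ 2) * Real.exp (-t / n))
      - (Real.exp (-t / (n + 1)) - Real.exp (-t / n))
      = Real.exp (-t / n) * (t / n ^ 2 - (Real.exp s - 1)) := by
    rw [hexp_split]; ring
  -- upper bound
  have hub : t * ((1 / n ^ 2) * Real.exp (-t / n))
      - (Real.exp (-t / (n + 1)) - Real.exp (-t / n)) ≤ 8 / n ^ 2 := by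
    rw [hG]
    have hdiff : t / n ^ 2 - s = t / (n ^ 2 * (n + 1)) := by
      rw [hs_def]; field_simp; ring
    have hdiff2 : t / (n ^ 2 * (n + 1)) ≤ t / n ^ 3 := by
      apply div_le_div_of_nonneg_left ht (by positivity)
      nlinarith
    have h1 : t / n ^ 2 - (Real.exp s - 1) ≤ t / n ^ 3 := by
      linarith
    have h2 : Real.exp (-t / n) * (t / n ^ 2 - (Real.exp s - 1))
        ≤ Real.exp (-t / n) * (t / n ^ 3) :=
      mul_le_mul_of_nonneg_left h1 (le_of_lt hu)
    have h3 : Real.exp (-t / n) * (t / n ^ 3) ≤ 1 / n ^ 2 := by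
      have hx := plaw_mul_exp_le (t / n) (by positivity)
      have hrw : -t / n = -(t / n) := by ring
      rw [hrw]
      have heq : Real.exp (-(t / n)) * (t / n ^ 3)
          = ((t / n) * Real.exp (-(t / n))) / n ^ 2 := by ring
      rw [heq]
      apply div_le_div_of_nonneg_right hx
      positivity
    have h4 : (1:ℝ) / n ^ 2 ≤ 8 / n ^ 2 := by
      gcongr
      norm_num
    linarith
  -- lower bound
  have hlb : (Real.exp (-t / (n + 1)) - Real.exp (-t / n))
      - t * ((1 / n ^ 2) * Real.exp (-t / n)) ≤ 8 / n ^ 2 := by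
    have key : (Real.exp s - 1) - t / n ^ 2 ≤ (t / n ^ 2) ^ 2 * Real.exp s := by
      have step1 : (Real.exp s - 1) - t / n ^ 2 ≤ s * Real.exp s - s := by
        linarith
      have step3 : s * (Real.exp s - 1) ≤ s * (s * Real.exp s) :=
        mul_le_mul_of_nonneg_left hhigh hs
      have hsq : s ^ 2 ≤ (t / n ^ 2) ^ 2 := by nlinarith
      have step4 : s ^ 2 * Real.exp s ≤ (t / n ^ 2) ^ 2 * Real.exp s :=
        mul_le_mul_of_nonneg_right hsq hes.le
      nlinarith
    have hneg : (Real.exp (-t / (n + 1)) - Real.exp (-t / n))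
        - t * ((1 / n ^ 2) * Real.exp (-t / n))
        = Real.exp (-t / n) * ((Real.exp s - 1) - t / n ^ 2) := by
      rw [hexp_split]; ring
    rw [hneg]
    have h2 : Real.exp (-t / n) * ((Real.exp s - 1) - t / n ^ 2)
        ≤ Real.exp (-t / n) * ((t / n ^ 2) ^ 2 * Real.exp s) :=
      mul_le_mul_of_nonneg_left key (le_of_lt hu)
    have h3 : Real.exp (-t / n) * ((t / n ^ 2) ^ 2 * Real.exp s)
        = (t ^ 2 / n ^ 4) * Real.exp (-t / (n + 1)) := by
      rw [hexp_split]; ring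
    have h4 : (t ^ 2 / n ^ 4) * Real.exp (-t / (n + 1)) ≤ 8 / n ^ 2 := by
      have hx := plaw_sq_exp_le (t / (n + 1)) (by positivity)
      have hrw : -t / (n + 1) = -(t / (n + 1)) := by ring
      rw [hrw]
      have hkey : t ^ 2 * Real.exp (-(t / (n + 1))) ≤ 2 * (n + 1) ^ 2 := by
        calc t ^ 2 * Real.exp (-(t / (n + 1)))
            = ((t / (n + 1)) ^ 2 * Real.exp (-(t / (n + 1)))) * (n + 1) ^ 2 := by
              field_simp
          _ ≤ 2 * (n + 1) ^ 2 := mul_le_mul_of_nonneg_right hx (by positivity)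
      have hnn : (n + 1) ^ 2 ≤ 4 * n ^ 2 := by nlinarith
      have hstep : t ^ 2 * Real.exp (-(t / (n + 1))) ≤ 8 * n ^ 2 := by linarith
      calc (t ^ 2 / n ^ 4) * Real.exp (-(t / (n + 1)))
          = (t ^ 2 * Real.exp (-(t / (n + 1)))) / n ^ 4 := by ring
        _ ≤ (8 * n ^ 2) / n ^ 4 := div_le_div_of_nonneg_right hstep (by positivity)
        _ = 8 / n ^ 2 := by field_simp
    linarith
  rw [abs_le]
  constructor
  · linarith
  · exact hub

lemma plaw_term_bound (t : ℝ) (ht : 0 ≤ t) (m : ℕ) :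
    |t * ((1 / ((m : ℝ) + 1) ^ 2) * Real.exp (-t / ((m : ℝ) + 1)))
      - (Real.exp (-t / ((m : ℝ) + 2)) - Real.exp (-t / ((m : ℝ) + 1)))|
      ≤ 8 / ((m : ℝ) + 1) ^ 2 := by
  have h := plaw_core t ((m : ℝ) + 1) ht (by simp)
  rw [show ((m : ℝ) + 2) = ((m : ℝ) + 1) + 1 from by ring]
  exact h

/-- Power-law decay of a superposition of exponentially decaying modes:
`S(t) = ∑_{n=1}^∞ n⁻² e^{−t/n}` converges for every `t ≥ 0`, and `t · S(t) → 1`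
as `t → +∞`. Here the sum over `n ≥ 1` is indexed by `n : ℕ` via `n + 1`. -/
theorem power_law_superposition :
    (∀ t : ℝ, 0 ≤ t →
      Summable (fun n : ℕ => (1 / ((n : ℝ) + 1) ^ 2) * Real.exp (-t / ((n : ℝ) + 1)))) ∧
      Filter.Tendsto
        (fun t : ℝ =>
          t * ∑' n : ℕ, (1 / ((n : ℝ) + 1) ^ 2) * Real.exp (-t / ((n : ℝ) + 1)))
        Filter.atTop (nhds 1) := by
  refine ⟨plaw_summable, ?_⟩
  set G : ℝ → ℕ → ℝ := fun t m =>
    t * ((1 / ((m : ℝ) + 1) ^ 2) * Real.exp (-t / ((m : ℝ) + 1)))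
      - (Real.exp (-t / ((m : ℝ) + 2)) - Real.exp (-t / ((m : ℝ) + 1))) with hG_def
  have hbound_sum : Summable (fun m : ℕ => 8 / ((m : ℝ) + 1) ^ 2) := by
    have h0 : Summable (fun n : ℕ => 1 / ((n : ℝ) + 1) ^ 2) := by
      have := (summable_nat_add_iff (f := fun n : ℕ => 1 / (n : ℝ) ^ 2) 1).2
        (summable_one_div_nat_pow.2 (by norm_num))
      simpa using this
    have := h0.mul_left 8
    simpa [div_eq_mul_inv] using this
  have hdivtop : ∀ c : ℝ, 0 < c → Tendsto (fun t : ℝ => t / c) atTop atTop := by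
    intro c hc
    exact tendsto_id.atTop_div_const hc
  have hexp0 : ∀ c : ℝ, 0 < c →
      Tendsto (fun t : ℝ => Real.exp (-t / c)) atTop (nhds 0) := by
    intro c hc
    have h2 : Tendsto (fun t : ℝ => -(t / c)) atTop atBot :=
      tendsto_neg_atTop_atBot.comp (hdivtop c hc)
    have h3 := Real.tendsto_exp_atBot.comp h2
    refine h3.congr (fun t => ?_)
    simp [Function.comp, neg_div]
  have htends : ∀ m : ℕ, Tendsto (fun t => G t m) atTop (nhds 0) := by
    intro m
    have hn : (0:ℝ) < (m : ℝ) + 1 := by positivity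
    have hn2 : (0:ℝ) < (m : ℝ) + 2 := by positivity
    have h1 : Tendsto (fun t : ℝ => t * ((1 / ((m : ℝ) + 1) ^ 2)
        * Real.exp (-t / ((m : ℝ) + 1)))) atTop (nhds 0) := by
      have hcomp : Tendsto (fun t : ℝ => (t / ((m : ℝ) + 1))
          * Real.exp (-(t / ((m : ℝ) + 1)))) atTop (nhds 0) := by
        have := (tendsto_pow_mul_exp_neg_atTop_nhds_zero 1).comp (hdivtop _ hn)
        refine this.congr (fun t => ?_)
        simp [Function.comp]
      have h := hcomp.const_mul (1 / ((m : ℝ) + 1))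
      rw [mul_zero] at h
      refine h.congr (fun t => ?_)
      rw [show -t / ((m : ℝ) + 1) = -(t / ((m : ℝ) + 1)) from by ring]
      simp only [one_div, ← inv_pow]
      ring
    have h2 := hexp0 _ hn2
    have h3 := hexp0 _ hn
    have h4 := h1.sub (h2.sub h3)
    simp only [sub_zero] at h4
    exact h4
  have hbound : ∀ᶠ t in (atTop : Filter ℝ), ∀ m : ℕ, ‖G t m‖ ≤ 8 / ((m : ℝ) + 1) ^ 2 := by
    filter_upwards [eventually_ge_atTop (0:ℝ)] with t ht m
    rw [Real.norm_eq_abs]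
    exact plaw_term_bound t ht m
  have hGt0 : Tendsto (fun t => ∑' m, G t m) atTop (nhds 0) := by
    have := tendsto_tsum_of_dominated_convergence hbound_sum htends hbound
    simpa using this
  have hid : ∀ t : ℝ, 0 ≤ t →
      t * (∑' n : ℕ, (1 / ((n : ℝ) + 1) ^ 2) * Real.exp (-t / ((n : ℝ) + 1)))
      = (1 - Real.exp (-t)) + ∑' m, G t m := by
    intro t ht
    have hS := plaw_summable t ht
    have hg : Summable (fun m : ℕ =>
        t * ((1 / ((m : ℝ) + 1) ^ 2) * Real.exp (-t / ((m : ℝ) + 1)))) := hS.mul_left t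
    have hd := plaw_hasSum_d t ht
    have hd_sum : Summable (fun m : ℕ =>
        Real.exp (-t / ((m : ℝ) + 2)) - Real.exp (-t / ((m : ℝ) + 1))) := hd.summable
    have htsub : (∑' m, G t m)
        = (∑' m : ℕ, t * ((1 / ((m : ℝ) + 1) ^ 2) * Real.exp (-t / ((m : ℝ) + 1))))
          - (∑' m : ℕ, (Real.exp (-t / ((m : ℝ) + 2)) - Real.exp (-t / ((m : ℝ) + 1)))) := by
      simp only [hG_def]
      exact Summable.tsum_sub hg hd_sum
    rw [htsub, hd.tsum_eq, hS.tsum_mul_left t]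
    ring
  have hfinal : Tendsto (fun t : ℝ => (1 - Real.exp (-t)) + ∑' m, G t m)
      atTop (nhds 1) := by
    have he : Tendsto (fun t : ℝ => Real.exp (-t)) atTop (nhds 0) := by
      have h := hexp0 1 one_pos
      refine h.congr (fun t => ?_)
      norm_num
    have h1 : Tendsto (fun t : ℝ => 1 - Real.exp (-t)) atTop (nhds 1) := by
      have := (tendsto_const_nhds (x := (1:ℝ)) (f := (atTop : Filter ℝ))).sub he
      simpa using this
    have := h1.add hGt0
    simpa using this
  refine Filter.Tendsto.congr' ?_ hfinal
  filter_upwards [eventually_ge_atTop (0:ℝ)] with t ht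
  exact (hid t ht).symm
end
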